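/- For every finite simple graph H there exists a finite antipodal graph G that contains H as an induced subgraph (i.e. there is a graph embedding of H into G). -/

import Mathlib

open SimpleGraph

/-- `v` is an *antipode* of `u` if `v` is at maximum distance from `u`. -/
def IsAntipode {V : Type*} (G : SimpleGraph V) (u v : V) : Prop :=
  ∀ w : V, G.dist u w ≤ G.dist u v

/-- A connected graph is *antipodal* if every vertex has exactly one antipode. -/
def IsAntipodal {V : Type*} (G : SimpleGraph V) : Prop :=
  G.Connected ∧ ∀ u : V, ∃! v : V, IsAntipode G u v

namespace Stmt14Aux

variable {W : Type}

/-- Base vertex type: main vertices (W plus 3 padding), tail vertices, and a hub. -/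
abbrev Y (W : Type) : Type := (W ⊕ Fin 3) ⊕ ((W ⊕ Fin 3) ⊕ Unit)

/-- Base adjacency: `H` (extended by isolated padding) on main vertices,
hub adjacent to all main vertices, each tail adjacent to its main vertex. -/
def BAdj (H : SimpleGraph W) : Y W → Y W → Prop
  | .inl (.inl a), .inl (.inl b) => H.Adj a b
  | .inl a, .inr (.inl b) => a = b
  | .inr (.inl a), .inl b => a = b
  | .inl _, .inr (.inr _) => True
  | .inr (.inr _), .inl _ => True
  | _, _ => False

variable (H : SimpleGraph W)

@[simp] lemma bAdj_mm (a b : W) :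
    BAdj H (.inl (.inl a)) (.inl (.inl b)) = H.Adj a b := rfl
@[simp] lemma bAdj_mp (a : W ⊕ Fin 3) (k : Fin 3) :
    BAdj H (.inl a) (.inl (.inr k)) = False := by cases a <;> rfl
@[simp] lemma bAdj_pm (k : Fin 3) (b : W ⊕ Fin 3) :
    BAdj H (.inl (.inr k)) (.inl b) = False := by cases b <;> rfl
@[simp] lemma bAdj_mt (a b : W ⊕ Fin 3) :
    BAdj H (.inl a) (.inr (.inl b)) = (a = b) := by cases a <;> rfl
@[simp] lemma bAdj_tm (a b : W ⊕ Fin 3) :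
    BAdj H (.inr (.inl a)) (.inl b) = (a = b) := by cases b <;> rfl
@[simp] lemma bAdj_mh (a : W ⊕ Fin 3) (u : Unit) :
    BAdj H (.inl a) (.inr (.inr u)) = True := by cases a <;> rfl
@[simp] lemma bAdj_hm (u : Unit) (b : W ⊕ Fin 3) :
    BAdj H (.inr (.inr u)) (.inl b) = True := by cases b <;> rfl
@[simp] lemma bAdj_tt (a b : W ⊕ Fin 3) :
    BAdj H (.inr (.inl a)) (.inr (.inl b)) = False := rfl
@[simp] lemma bAdj_th (a : W ⊕ Fin 3) (u : Unit) :
    BAdj H (.inr (.inl a)) (.inr (.inr u)) = False := rfl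
@[simp] lemma bAdj_ht (u : Unit) (b : W ⊕ Fin 3) :
    BAdj H (.inr (.inr u)) (.inr (.inl b)) = False := rfl
@[simp] lemma bAdj_hh (u v : Unit) :
    BAdj H (.inr (.inr u)) (.inr (.inr v)) = False := rfl

lemma bAdj_symm : ∀ {x y : Y W}, BAdj H x y → BAdj H y x := by
  rintro ((a | a) | (a | a)) ((b | b) | (b | b)) h <;> simp_all <;> exact h.symm

lemma bAdj_irrefl : ∀ x : Y W, ¬ BAdj H x x := by
  rintro ((a | a) | (a | a)) h <;> simp_all

/-- The antipodal graph: two copies of the base, with cross edges between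
distinct non-adjacent base vertices. -/
def G : SimpleGraph (Y W × Bool) where
  Adj p q := if p.2 = q.2 then BAdj H p.1 q.1 else p.1 ≠ q.1 ∧ ¬ BAdj H p.1 q.1
  symm := by
    constructor
    rintro ⟨x, i⟩ ⟨y, j⟩ h
    by_cases hij : i = j
    · subst hij
      simp only [if_pos rfl] at h ⊢
      exact bAdj_symm H h
    · rw [if_neg hij] at h
      rw [if_neg (Ne.symm hij)]
      exact ⟨fun e => h.1 e.symm, fun e => h.2 (bAdj_symm H e)⟩
  loopless := by
    constructor
    rintro ⟨x, i⟩ h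
    simp only [if_pos rfl] at h
    exact bAdj_irrefl H x h

lemma adj_same {x y : Y W} {i : Bool} : (G H).Adj (x, i) (y, i) ↔ BAdj H x y := by
  simp [G]

lemma adj_cross {x y : Y W} {i j : Bool} (hij : i ≠ j) :
    (G H).Adj (x, i) (y, j) ↔ x ≠ y ∧ ¬ BAdj H x y := by
  simp [G, hij]

lemma exists_third (a b : W ⊕ Fin 3) : ∃ c : W ⊕ Fin 3, c ≠ a ∧ c ≠ b := by
  by_contra hc
  push_neg at hc
  by_cases e0 : (Sum.inr 0 : W ⊕ Fin 3) = a
  · have h1 := hc (Sum.inr 1) (by rw [← e0]; simp [Fin.ext_iff])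
    have h2 := hc (Sum.inr 2) (by rw [← e0]; simp [Fin.ext_iff])
    rw [← h2] at h1; simp [Fin.ext_iff] at h1
  · have h0 := hc (Sum.inr 0) e0
    by_cases e1 : (Sum.inr 1 : W ⊕ Fin 3) = a
    · have h2 := hc (Sum.inr 2) (by rw [← e1]; simp [Fin.ext_iff])
      rw [← h2] at h0; simp [Fin.ext_iff] at h0
    · have h1 := hc (Sum.inr 1) e1
      rw [← h1] at h0; simp [Fin.ext_iff] at h0

/-- A two-step walk via an explicit common neighbour. -/
lemma walk2 (z : Y W × Bool) {u v : Y W × Bool}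
    (h1 : (G H).Adj u z) (h2 : (G H).Adj z v) :
    ∃ p : (G H).Walk u v, p.length ≤ 2 :=
  ⟨Walk.cons h1 (Walk.cons h2 Walk.nil), by simp⟩

lemma walk1 {u v : Y W × Bool} (h1 : (G H).Adj u v) :
    ∃ p : (G H).Walk u v, p.length ≤ 2 :=
  ⟨Walk.cons h1 Walk.nil, by simp⟩

lemma not_self_bnot (i : Bool) : i ≠ !i := by cases i <;> simp

/-- Any two distinct vertices in the same copy are joined by a walk of length ≤ 2. -/
lemma walk_same : ∀ (x y : Y W) (i : Bool), x ≠ y →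
    ∃ p : (G H).Walk (x, i) (y, i), p.length ≤ 2 := by
  have hcr : ∀ (i : Bool) (x y : Y W), x ≠ y → ¬ BAdj H x y → (G H).Adj (x, i) (y, !i) :=
    fun i x y h1 h2 => (adj_cross H (not_self_bnot i)).2 ⟨h1, h2⟩
  have hcr' : ∀ (i : Bool) (x y : Y W), x ≠ y → ¬ BAdj H x y → (G H).Adj (x, !i) (y, i) :=
    fun i x y h1 h2 => (adj_cross H (not_self_bnot i).symm).2 ⟨h1, h2⟩
  rintro (a | (a | a)) (b | (b | b)) i hxy
  -- main, main : hub is a common same-copy neighbour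
  · exact walk2 H (.inr (.inr ()), i) ((adj_same H).2 (by simp)) ((adj_same H).2 (by simp))
  -- main a, tail b
  · by_cases hab : a = b
    · subst hab; exact walk1 H ((adj_same H).2 (by simp))
    · obtain ⟨c, hca, hcb⟩ := exists_third a b
      exact walk2 H (.inr (.inl c), !i)
        (hcr i _ _ (by simp) (by simp; exact Ne.symm hca))
        (hcr' i _ _ (by simpa using hcb) (by simp))
  -- main, hub : adjacent
  · exact walk1 H ((adj_same H).2 (by simp))
  -- tail a, main b
  · by_cases hab : a = b
    · subst hab; exact walk1 H ((adj_same H).2 (by simp))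
    · obtain ⟨c, hca, hcb⟩ := exists_third a b
      exact walk2 H (.inr (.inl c), !i)
        (hcr i _ _ (by simpa using Ne.symm hca) (by simp))
        (hcr' i _ _ (by simp) (by simp; exact hcb))
  -- tail, tail : hub via cross
  · exact walk2 H (.inr (.inr ()), !i)
      (hcr i _ _ (by simp) (by simp)) (hcr' i _ _ (by simp) (by simp))
  -- tail a, hub
  · obtain ⟨c, hca, _⟩ := exists_third a a
    exact walk2 H (.inr (.inl c), !i)
      (hcr i _ _ (by simpa using Ne.symm hca) (by simp))
      (hcr' i _ _ (by simp) (by simp))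
  -- hub, main : adjacent
  · exact walk1 H ((adj_same H).2 (by simp))
  -- hub, tail b
  · obtain ⟨c, hcb, _⟩ := exists_third b b
    exact walk2 H (.inr (.inl c), !i)
      (hcr i _ _ (by simp) (by simp))
      (hcr' i _ _ (by simpa using hcb) (by simp))
  -- hub, hub : impossible
  · exact absurd (Subsingleton.elim a b ▸ rfl : (Sum.inr (Sum.inr a) : Y W) = Sum.inr (Sum.inr b)) hxy

/-- Any two distinct base vertices in opposite copies are joined by a walk of length ≤ 2. -/
lemma walk_cross : ∀ (x y : Y W) (i j : Bool), i ≠ j → x ≠ y →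
    ∃ p : (G H).Walk (x, i) (y, j), p.length ≤ 2 := by
  intro x y i j hij hxy
  by_cases hadj : BAdj H x y
  swap
  · exact walk1 H ((adj_cross H hij).2 ⟨hxy, hadj⟩)
  revert hadj hxy
  rcases x with (a | (a | a)) <;> rcases y with (b | (b | b)) <;> intro hxy hadj
  -- main a, main b : go via tail a
  · refine walk2 H (.inr (.inl a), i) ((adj_same H).2 (by simp))
      ((adj_cross H hij).2 ⟨by simp, by simp; exact fun e => bAdj_irrefl H _ (e ▸ hadj)⟩)
  -- main a, tail b : necessarily a = b; go via hub in copy i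
  · have hab : a = b := by simpa using hadj
    subst hab
    exact walk2 H (.inr (.inr ()), i) ((adj_same H).2 (by simp))
      ((adj_cross H hij).2 ⟨by simp, by simp⟩)
  -- main a, hub : go via tail a
  · exact walk2 H (.inr (.inl a), i) ((adj_same H).2 (by simp))
      ((adj_cross H hij).2 ⟨by simp, by simp⟩)
  -- tail a, main b : necessarily a = b; go via hub in copy j
  · have hab : a = b := by simpa using hadj
    subst hab
    exact walk2 H (.inr (.inr ()), j) ((adj_cross H hij).2 ⟨by simp, by simp⟩)
      ((adj_same H).2 (by simp))
  · simp at hadj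
  · simp at hadj
  -- hub, main b : go via tail b in copy j
  · exact walk2 H (.inr (.inl b), j) ((adj_cross H hij).2 ⟨by simp, by simp⟩)
      ((adj_same H).2 (by simp))
  · simp at hadj
  · simp at hadj

lemma exists_nonnbr (x : Y W) : ∃ w : Y W, w ≠ x ∧ ¬ BAdj H x w := by
  rcases x with (a | (a | a))
  · obtain ⟨c, hca, -⟩ := exists_third a a
    exact ⟨.inr (.inl c), by simp, by simp; exact fun e => hca e.symm⟩
  · exact ⟨.inr (.inr ()), by simp, by simp⟩
  · exact ⟨.inr (.inl (Sum.inr 0)), by simp, by simp⟩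

/-- A walk of length ≤ 3 from `(x,i)` to its partner `(x,!i)`. -/
lemma walk_matched (x : Y W) (i : Bool) :
    ∃ p : (G H).Walk (x, i) (x, !i), p.length ≤ 3 := by
  obtain ⟨w, hw1, hw2⟩ := exists_nonnbr H x
  obtain ⟨q, hq⟩ := walk_same H w x (!i) hw1
  exact ⟨Walk.cons ((adj_cross H (not_self_bnot i)).2 ⟨Ne.symm hw1, hw2⟩) q, by
    simpa using Nat.add_le_add_right hq 1⟩

/-- Every pair of vertices is joined by a walk of length ≤ 3. -/
lemma walk_le3 (u v : Y W × Bool) : ∃ p : (G H).Walk u v, p.length ≤ 3 := by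
  obtain ⟨x, i⟩ := u
  obtain ⟨y, j⟩ := v
  by_cases hxy : x = y
  · subst hxy
    by_cases hij : i = j
    · subst hij; exact ⟨Walk.nil, by simp⟩
    · have : j = !i := by cases i <;> cases j <;> simp_all
      subst this; exact walk_matched H x i
  · by_cases hij : i = j
    · subst hij
      obtain ⟨p, hp⟩ := walk_same H x y i hxy
      exact ⟨p, hp.trans (by norm_num)⟩
    · obtain ⟨p, hp⟩ := walk_cross H x y i j hij hxy
      exact ⟨p, hp.trans (by norm_num)⟩

lemma conn : (G H).Connected := by
  have : Nonempty (Y W × Bool) := ⟨(.inr (.inr ()), false)⟩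
  exact Connected.mk fun u v => ((walk_le3 H u v).choose).reachable

lemma dist_le_two {x y : Y W} (i j : Bool) (hxy : x ≠ y) :
    (G H).dist (x, i) (y, j) ≤ 2 := by
  by_cases hij : i = j
  · subst hij
    obtain ⟨p, hp⟩ := walk_same H x y i hxy
    exact (dist_le p).trans hp
  · obtain ⟨p, hp⟩ := walk_cross H x y i j hij hxy
    exact (dist_le p).trans hp

lemma not_adj_matched (x : Y W) (i : Bool) : ¬ (G H).Adj (x, i) (x, !i) := fun h =>
  ((adj_cross H (not_self_bnot i)).1 h).1 rfl

lemma no_common (x : Y W) (i : Bool) (z : Y W × Bool) :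
    ¬ ((G H).Adj (x, i) z ∧ (G H).Adj z (x, !i)) := by
  rintro ⟨h1, h2⟩
  obtain ⟨y, j⟩ := z
  by_cases hji : i = j
  · subst hji
    have hb : BAdj H x y := (adj_same H).1 h1
    exact ((adj_cross H (not_self_bnot i)).1 h2).2 (bAdj_symm H hb)
  · have hj : j = !i := by cases i <;> cases j <;> simp_all
    subst hj
    have hb : BAdj H y x := (adj_same H).1 h2
    exact ((adj_cross H hji).1 h1).2 (bAdj_symm H hb)

lemma short_walk {u v : Y W × Bool} (q : (G H).Walk u v) (hq : q.length ≤ 2) :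
    u = v ∨ (G H).Adj u v ∨ ∃ z, (G H).Adj u z ∧ (G H).Adj z v := by
  cases q with
  | nil => exact Or.inl rfl
  | cons h q' =>
    cases q' with
    | nil => exact Or.inr (Or.inl h)
    | cons h' q'' =>
      refine Or.inr (Or.inr ⟨_, h, ?_⟩)
      have h0 : q''.length = 0 := by simp only [Walk.length_cons] at hq; omega
      have := q''.eq_of_length_eq_zero h0
      subst this
      exact h'

lemma dist_matched (x : Y W) (i : Bool) : (G H).dist (x, i) (x, !i) = 3 := by
  obtain ⟨p, hp⟩ := walk_matched H x i
  have hle : (G H).dist (x, i) (x, !i) ≤ 3 := (dist_le p).trans hp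
  have hr : (G H).Reachable (x, i) (x, !i) := p.reachable
  obtain ⟨q, hq⟩ := hr.exists_walk_length_eq_dist
  by_contra hne
  have hq2 : q.length ≤ 2 := by omega
  rcases short_walk H q hq2 with he | ha | ⟨z, h1, h2⟩
  · exact not_self_bnot i (congrArg Prod.snd he)
  · exact not_adj_matched H x i ha
  · exact no_common H x i z ⟨h1, h2⟩

end Stmt14Aux

/-- Every finite graph `H` is an induced subgraph of some finite antipodal graph. -/
theorem stmt_14 {W : Type} [Fintype W] (H : SimpleGraph W) :
    ∃ (V : Type) (_ : Fintype V) (G : SimpleGraph V),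
      IsAntipodal G ∧ Nonempty (H ↪g G) := by
  classical
  refine ⟨Stmt14Aux.Y W × Bool, inferInstance, Stmt14Aux.G H, ⟨Stmt14Aux.conn H, ?_⟩, ⟨?_⟩⟩
  · rintro ⟨x, i⟩
    refine ⟨(x, !i), ?_, ?_⟩
    · intro w
      rw [Stmt14Aux.dist_matched H x i]
      obtain ⟨p, hp⟩ := Stmt14Aux.walk_le3 H (x, i) w
      exact (SimpleGraph.dist_le p).trans hp
    · rintro ⟨y, j⟩ hy
      have h3 : 3 ≤ (Stmt14Aux.G H).dist (x, i) (y, j) := by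
        have := hy (x, !i)
        rwa [Stmt14Aux.dist_matched H x i] at this
      by_cases hxy : x = y
      · subst hxy
        by_cases hij : j = i
        · subst hij
          rw [SimpleGraph.dist_self] at h3
          omega
        · have hj : j = !i := by cases i <;> cases j <;> simp_all
          rw [hj]
      · have h2 := Stmt14Aux.dist_le_two H i j hxy
        omega
  · exact ⟨⟨fun w => (Sum.inl (Sum.inl w), false), fun a b h => by simpa using h⟩,
      fun {a b} => by exact Stmt14Aux.adj_same H⟩
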